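/- arXiv:2204.11130 — 2 statements merged into one kernel-verified Lean document; each statement's English description precedes it below -/
import Mathlib

section
/- Let π be the free group on x-independent generators γ₁, …, γₙ (with γ∞ := (γₙ⋯γ₁)⁻¹), let X = {x₁, …, x_d}, and define a right action of π on the free left π-set π × X by: x₁·γ₁ = γ∞γₙ·x₂; x_i·γ₁ = x_{i+1} for 1 < i < d; x_d·γ₁ = γ∞⁻¹·x₁; x₁·γ_{j+1} = γ_j·x₁ and x_i·γ_{j+1} = x_i for 1 < i ≤ d, 1 ≤ j < n; x₁·γ∞' = γ∞·x_d and x_{i+1}·γ∞' = x_i for 1 ≤ i < d, where γ∞' denotes the abstract generator γ∞. Then this assignment extends to a well-defined right π-action on π × X commuting with the free left π-action; equivalently, the induced permutation-with-cocycle data satisfies the relation γ∞γₙ⋯γ₁ = 1, i.e. applying the right actions of γ₁, then γ₂, …, γₙ, then γ∞ to each x_i returns x_i with trivial accumulated left factor. -/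
/-- `π` is the free group on `γ₁,…,γₙ` (0-based indices). -/
abbrev F (n : ℕ) := FreeGroup (Fin n)

/-- The generator `γ_{k+1}` for `k < n` (and `1` otherwise). -/
def gn (n : ℕ) (k : ℕ) : F n := if h : k < n then FreeGroup.of (⟨k, h⟩ : Fin n) else 1

/-- `γ∞ := (γₙ γₙ₋₁ ⋯ γ₁)⁻¹`. -/
def gInf (n : ℕ) : F n := (((List.range n).reverse.map (gn n)).prod)⁻¹

/-- The right action of the abstract generators `γ₁,…,γₙ,γ∞` (encoded as
`Sum.inl 0, …, Sum.inl (n-1), Sum.inr ()`) on the basis data `π × {x₁,…,x_d}`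
of the biset `𝔅(f)` of `f(z) = z^d + c`:
`x₁·γ₁ = γ∞γₙ·x₂`, `x_i·γ₁ = x_{i+1}` for `1 < i < d`, `x_d·γ₁ = γ∞⁻¹·x₁`;
`x₁·γ_{j+1} = γ_j·x₁`, `x_i·γ_{j+1} = x_i` for `i > 1`;
`x₁·γ∞ = γ∞·x_d`, `x_{i+1}·γ∞ = x_i`.
(Cyclic index shifts are implemented by `finRotate d : i ↦ i + 1`.) -/
def step (n d : ℕ) (s : Sum (Fin n) Unit) (b : F n × Fin d) : F n × Fin d :=
  match s with
  | Sum.inl j =>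
      if j.val = 0 then
        -- action of γ₁
        if b.2.val = 0 then (b.1 * gInf n * gn n (n - 1), finRotate d b.2)
        else if b.2.val = d - 1 then (b.1 * (gInf n)⁻¹, finRotate d b.2)
        else (b.1, finRotate d b.2)
      else
        -- action of γ_{j+1}, 1 ≤ j ≤ n-1 (paper indexing)
        if b.2.val = 0 then (b.1 * gn n (j.val - 1), b.2) else b
  | Sum.inr _ =>
      -- action of γ∞
      if b.2.val = 0 then (b.1 * gInf n, (finRotate d).symm b.2)
      else (b.1, (finRotate d).symm b.2)

lemma rot_symm_val (m : ℕ) (i : Fin (m+1)) :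
    ((finRotate (m+1)).symm i).val = if i.val = 0 then m else i.val - 1 := by
  have hi := i.isLt
  by_cases h : i.val = 0
  · have h2 : (finRotate (m+1)).symm i = ⟨m, by omega⟩ := by
      rw [Equiv.symm_apply_eq, finRotate_succ_apply]
      apply Fin.ext
      rw [Fin.val_add_one, if_pos (by apply Fin.ext; simp)]
      omega
    rw [h2, if_pos h]
  · have h2 : (finRotate (m+1)).symm i = ⟨i.val - 1, by omega⟩ := by
      rw [Equiv.symm_apply_eq, finRotate_succ_apply]
      apply Fin.ext
      rw [Fin.val_add_one, if_neg (by
        intro hc; have := congrArg Fin.val hc; simp at this; omega)]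
      simp; omega
    rw [h2, if_neg h]

lemma step_skip (n d : ℕ) (j : Fin n) (hj : j.val ≠ 0) (b : F n × Fin d)
    (hb : b.2.val ≠ 0) : step n d (Sum.inl j) b = b := by
  simp [step, hj, hb]

lemma fold_skip (n d : ℕ) (l : List (Fin n)) (hl : ∀ j ∈ l, j.val ≠ 0)
    (b : F n × Fin d) (hb : b.2.val ≠ 0) :
    (l.map Sum.inl).foldl (fun b s => step n d s b) b = b := by
  induction l with
  | nil => rfl
  | cons j l ih =>
      simp only [List.map_cons, List.foldl_cons,
        step_skip n d j (hl j List.mem_cons_self) b hb]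
      exact ih (fun x hx => hl x (List.mem_cons_of_mem _ hx))

lemma fold_mul (n d : ℕ) (l : List (Fin n)) (hl : ∀ j ∈ l, j.val ≠ 0)
    (a : F n) (x : Fin d) (hx : x.val = 0) :
    (l.map Sum.inl).foldl (fun b s => step n d s b) (a, x)
      = (a * (l.map (fun j => gn n (j.val - 1))).prod, x) := by
  induction l generalizing a with
  | nil => simp
  | cons j l ih =>
      have hj : j.val ≠ 0 := hl j List.mem_cons_self
      simp only [List.map_cons, List.foldl_cons]
      have h1 : step n d (Sum.inl j) (a, x) = (a * gn n (j.val - 1), x) := by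
        simp [step, hj, hx]
      rw [h1, ih (fun y hy => hl y (List.mem_cons_of_mem _ hy))]
      simp [mul_assoc]

lemma finRange_map_val (n : ℕ) : (List.finRange n).map Fin.val = List.range n := by
  apply List.ext_getElem <;> simp

lemma prod_key (m : ℕ) :
    ((((List.finRange m).map Fin.succ).reverse.map
        (fun j : Fin (m+1) => gn (m+1) (j.val - 1))).prod)
      * gInf (m+1) * gn (m+1) m = 1 := by
  have h1 : ((List.finRange m).map Fin.succ).reverse.map
        (fun j : Fin (m+1) => gn (m+1) (j.val - 1))
      = ((List.range m).map (gn (m+1))).reverse := by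
    simp only [List.map_reverse, List.map_map]
    congr 1
    rw [← finRange_map_val m, List.map_map]
    congr 1
  have h2 : gInf (m+1)
      = (gn (m+1) m * (((List.range m).map (gn (m+1))).reverse).prod)⁻¹ := by
    rw [gInf, inv_inj]
    rw [List.range_succ, List.reverse_append]
    simp [List.map_reverse]
  rw [h1, h2]
  simp [mul_assoc]

/-- The table above extends to a well-defined right `π`-action on `π × {x₁,…,x_d}`
commuting with the free left `π`-action: each generator's action commutes with left
multiplication, and the relation element `γ∞γₙ⋯γ₁` acts trivially: applying the successive right
actions of the letters of `γ∞γₙ⋯γ₁` to each basis element `x_i` returns `x_i`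
with trivial accumulated left factor. -/
theorem stmt5 (n d : ℕ) (hn : 1 ≤ n) (hd : 2 ≤ d) :
    (∀ (s : Sum (Fin n) Unit) (a : F n) (b : F n × Fin d),
      step n d s (a * b.1, b.2) = (a * (step n d s b).1, (step n d s b).2)) ∧
    (∀ i : Fin d,
      ((Sum.inr () : Sum (Fin n) Unit) ::
          (List.ofFn (fun k : Fin n => (Sum.inl k : Sum (Fin n) Unit))).reverse).foldl
        (fun b s => step n d s b) ((1 : F n), i) = (1, i)) := by
  constructor
  · intro s a b
    obtain ⟨b1, b2⟩ := b
    cases s with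
    | inl j => simp only [step]; split_ifs <;> simp [mul_assoc]
    | inr u => simp only [step]; split_ifs <;> simp [mul_assoc]
  · intro i
    obtain ⟨m, rfl⟩ : ∃ m, n = m + 1 := ⟨n - 1, by omega⟩
    obtain ⟨e, rfl⟩ : ∃ e, d = e + 1 := ⟨d - 1, by omega⟩
    have he : 1 ≤ e := by omega
    -- rewrite the list of generators
    have hL : (List.ofFn (fun k : Fin (m+1) => (Sum.inl k : Sum (Fin (m+1)) Unit))).reverse
        = (((List.finRange m).map Fin.succ).reverse.map
            (Sum.inl : Fin (m+1) → Sum (Fin (m+1)) Unit)) ++ [Sum.inl (0 : Fin (m+1))] := by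
      simp [List.ofFn_eq_map, List.finRange_succ, List.map_reverse, List.map_map]
    have hT : ∀ j ∈ ((List.finRange m).map Fin.succ).reverse, (j : Fin (m+1)).val ≠ 0 := by
      intro j hj
      rw [List.mem_reverse, List.mem_map] at hj
      obtain ⟨k, -, rfl⟩ := hj
      simp [Fin.val_succ]
    simp only [List.foldl_cons, hL, List.foldl_append, List.foldl_cons, List.foldl_nil]
    have hrot : ((finRotate (e+1)).symm i).val = if i.val = 0 then e else i.val - 1 :=
      rot_symm_val e i
    by_cases h0 : i.val = 0
    · -- x₁
      have hstep1 : step (m+1) (e+1) (Sum.inr ()) ((1 : F (m+1)), i)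
          = (gInf (m+1), (finRotate (e+1)).symm i) := by simp [step, h0]
      rw [hstep1, fold_skip (m+1) (e+1) _ hT _ (by rw [hrot, if_pos h0]; omega)]
      have hv : ((finRotate (e+1)).symm i).val = e := by rw [hrot, if_pos h0]
      have hne : e ≠ 0 := by omega
      have : step (m+1) (e+1) (Sum.inl (0 : Fin (m+1))) (gInf (m+1), (finRotate (e+1)).symm i)
          = (1, i) := by
        simp [step, hv, hne, -finRotate_symm_apply, -finRotate_succ_symm_apply]
      rw [this]
    · have hstep1 : step (m+1) (e+1) (Sum.inr ()) ((1 : F (m+1)), i)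
          = (1, (finRotate (e+1)).symm i) := by simp [step, h0]
      rw [hstep1]
      by_cases h1 : i.val = 1
      · -- x₂
        have hv : ((finRotate (e+1)).symm i).val = 0 := by rw [hrot, if_neg h0, h1]
        rw [fold_mul (m+1) (e+1) _ hT 1 _ hv]
        have : step (m+1) (e+1) (Sum.inl (0 : Fin (m+1)))
            (1 * (((List.finRange m).map Fin.succ).reverse.map
              (fun j : Fin (m+1) => gn (m+1) (j.val - 1))).prod, (finRotate (e+1)).symm i)
            = (1, i) := by
          simp [step, hv, -finRotate_symm_apply, -finRotate_succ_symm_apply]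
          simpa using prod_key m
        rw [this]
      · -- xᵢ, i ≥ 3
        have hv : ((finRotate (e+1)).symm i).val = i.val - 1 := by rw [hrot, if_neg h0]
        have hi := i.isLt
        rw [fold_skip (m+1) (e+1) _ hT _
          (by show ((finRotate (e+1)).symm i).val ≠ 0; omega)]
        have hv1 : ((finRotate (e+1)).symm i).val ≠ 0 := by omega
        have hv2 : ((finRotate (e+1)).symm i).val ≠ e := by omega
        have : step (m+1) (e+1) (Sum.inl (0 : Fin (m+1))) (1, (finRotate (e+1)).symm i) = (1, i) := by
          simp [step, hv1, hv2, -finRotate_symm_apply, -finRotate_succ_symm_apply]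
        rw [this]
end

section
/- With the biset 𝔅(f) of the previous context (right π-action on basis x₁,…,x_d given by the stated table), the right action of the relation element r = γ∞ γₙ γₙ₋₁ ⋯ γ₁ on each basis element x_i equals the identity: x_i · r = x_i with trivial left coefficient, for all 1 ≤ i ≤ d. -/
lemma step_inl_ne {n d : ℕ} {a : Fin n} (ha : a.val ≠ 0) (g : F n) (j : Fin d) :
    step n d (Sum.inl a) (g, j) =
      if j.val = 0 then (g * gn n (a.val - 1), j) else (g, j) := by
  by_cases h : j.val = 0 <;> simp [step, ha, h]

lemma foldl_pos (n d : ℕ) (l : List (Fin n)) (hl : ∀ a ∈ l, a.val ≠ 0) (g : F n) (j : Fin d) :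
    (l.map Sum.inl).foldl (fun b s => step n d s b) (g, j) =
      if j.val = 0 then (g * (l.map (fun a => gn n (a.val - 1))).prod, j) else (g, j) := by
  induction l generalizing g with
  | nil => by_cases h : j.val = 0 <;> simp [h]
  | cons a t ih =>
    have ha : a.val ≠ 0 := hl a (List.mem_cons_self ..)
    have ht : ∀ b ∈ t, b.val ≠ 0 := fun b hb => hl b (List.mem_cons_of_mem _ hb)
    rw [List.map_cons, List.foldl_cons]
    show (t.map Sum.inl).foldl (fun b s => step n d s b) (step n d (Sum.inl a) (g, j)) = _
    rw [step_inl_ne ha]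
    by_cases h : j.val = 0 <;> simp [h, ih ht, mul_assoc]

/-- The right action of the relation element `r = γ∞ γₙ γₙ₋₁ ⋯ γ₁` on each basis
element `x_i` equals the identity: `x_i · r = x_i` with trivial left coefficient,
for all `1 ≤ i ≤ d`. -/
theorem stmt6 (n d : ℕ) (hn : 1 ≤ n) (hd : 2 ≤ d) :
    ∀ i : Fin d,
      ((Sum.inr () : Sum (Fin n) Unit) ::
          (List.ofFn (fun k : Fin n => (Sum.inl k : Sum (Fin n) Unit))).reverse).foldl
        (fun b s => step n d s b) ((1 : F n), i) = (1, i) := by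
  obtain ⟨m, rfl⟩ : ∃ m, n = m + 1 := ⟨n - 1, by omega⟩
  obtain ⟨e, rfl⟩ : ∃ e, d = e + 2 := ⟨d - 2, by omega⟩
  intro i
  have hlist : (List.ofFn (fun k : Fin (m+1) => (Sum.inl k : Sum (Fin (m+1)) Unit))).reverse
      = (((List.finRange m).map Fin.succ).reverse).map Sum.inl
          ++ [(Sum.inl 0 : Sum (Fin (m+1)) Unit)] := by
    rw [List.ofFn_eq_map, List.finRange_succ]
    simp [List.map_reverse]
  have hl : ∀ a ∈ ((List.finRange m).map Fin.succ).reverse, (a : Fin (m+1)).val ≠ 0 := by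
    intro a ha
    simp only [List.mem_reverse, List.mem_map] at ha
    obtain ⟨b, -, rfl⟩ := ha
    simp [Fin.val_succ]
  set Q : F (m+1) := ((List.range m).reverse.map (gn (m+1))).prod with hQ
  have h1 : (List.finRange m).map (fun x : Fin m => gn (m+1) x.val)
      = (List.range m).map (gn (m+1)) := by
    conv_rhs => rw [show List.range m = (List.finRange m).map Fin.val from List.ext_getElem (by simp) (by simp)]
    rw [List.map_map]; rfl
  have hP : ((((List.finRange m).map Fin.succ).reverse).map
        (fun a : Fin (m+1) => gn (m+1) (a.val - 1))).prod = Q := by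
    rw [hQ]
    simp only [List.map_reverse, List.map_map, Function.comp_def, Fin.val_succ,
      Nat.add_sub_cancel]
    rw [h1]
  have hgInf : gInf (m+1) = (gn (m+1) m * Q)⁻¹ := by
    simp [gInf, hQ, List.range_succ]
  have hlast : (Fin.last (e + 1) : Fin (e+2)).val = e + 1 := rfl
  rw [hlist, List.foldl_cons, List.foldl_append]
  show List.foldl _ (List.foldl _ (step (m+1) (e+2) (Sum.inr ()) (1, i)) _) _ = _
  by_cases h0 : i.val = 0
  · -- i = x₁
    have hi : i = 0 := Fin.ext (by simpa using h0)
    have hs : step (m+1) (e+2) (Sum.inr ()) (1, i) = (gInf (m+1), Fin.last (e + 1)) := by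
      simp [step, h0, hi, Equiv.symm_apply_eq, finRotate_last, -finRotate_symm_apply]
    rw [hs, foldl_pos _ _ _ hl, if_neg (by simp [hlast])]
    show step (m+1) (e+2) (Sum.inl 0) (gInf (m+1), Fin.last (e+1)) = _
    simp [step, hlast, hi, finRotate_last]
  · have hs : step (m+1) (e+2) (Sum.inr ()) (1, i) = (1, (finRotate (e+2)).symm i) := by
      simp [step, h0]
    rw [hs, foldl_pos _ _ _ hl]
    by_cases h1' : i.val = 1
    · -- i = x₂
      have hsymm : (finRotate (e+2)).symm i = 0 := by
        rw [Equiv.symm_apply_eq]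
        refine Fin.ext ?_
        rw [coe_finRotate_of_ne_last (by simp [Fin.ext_iff, hlast])]
        simp [h1']
      rw [hsymm, if_pos (by simp), one_mul, hP]
      show step (m+1) (e+2) (Sum.inl 0) (Q, 0) = _
      have hrot : finRotate (e+2) 0 = i := by rw [← hsymm, Equiv.apply_symm_apply]
      have hstep : step (m+1) (e+2) (Sum.inl 0) (Q, 0)
          = (Q * gInf (m+1) * gn (m+1) m, finRotate (e+2) 0) := by
        simp [step]
      rw [hstep, hrot, hgInf, Prod.mk.injEq]
      exact ⟨by group, rfl⟩
    · -- i = x_k, k ≥ 3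
      set j := (finRotate (e+2)).symm i with hj
      have hji : finRotate (e+2) j = i := Equiv.apply_symm_apply _ _
      have hjlast : j ≠ Fin.last (e + 1) := by
        intro h
        rw [h, finRotate_last] at hji
        exact h0 (by simp [← hji])
      have hjval : j.val + 1 = i.val := by
        rw [← hji, coe_finRotate_of_ne_last hjlast]
      have hj0 : j.val ≠ 0 := by omega
      have hi2 : i.val < e + 2 := i.isLt
      have hjd : j.val ≠ e + 1 := by omega
      rw [if_neg hj0]
      show step (m+1) (e+2) (Sum.inl 0) (1, j) = _
      simp [step, hj0, hjd, hji]
end
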